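/- Discrete-time ℓ⁰/ℓ¹ equivalence: Let 𝒰 ⊆ ℝᴺ be a nonempty set of vectors u with ‖u‖_∞ ≤ 1. Define J₀(u) as the number of nonzero entries of u, and J₁(u) = Σ_{k=0}^{N-1} |u_k|. Suppose the set 𝒰₁* of minimizers of J₁ over 𝒰 is nonempty and every element of 𝒰₁* has all entries in {-1, 0, 1}. Then the set 𝒰₀* of minimizers of J₀ over 𝒰 equals 𝒰₁*. -/
import Mathlib

theorem discrete_maximum_handsoff_eq_l1_optimal (N : ℕ) (hN : 0 < N)
    (U : Set (Fin N → ℝ)) (hUne : U.Nonempty)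
    (hbdd : ∀ u ∈ U, ∀ k, |u k| ≤ 1)
    (J0 : (Fin N → ℝ) → ℕ) (J1 : (Fin N → ℝ) → ℝ)
    (hJ0 : ∀ u, J0 u = (Finset.univ.filter (fun k => u k ≠ 0)).card)
    (hJ1 : ∀ u, J1 u = ∑ k, |u k|)
    (U0 U1 : Set (Fin N → ℝ))
    (hU0 : U0 = {u ∈ U | ∀ v ∈ U, J0 u ≤ J0 v})
    (hU1 : U1 = {u ∈ U | ∀ v ∈ U, J1 u ≤ J1 v})
    (hU1ne : U1.Nonempty)
    (htern : ∀ u ∈ U1, ∀ k, u k ∈ ({-1, 0, 1} : Set ℝ)) :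
    U0 = U1 := by
  have hle : ∀ v ∈ U, J1 v ≤ (J0 v : ℝ) := by
    intro v hv
    rw [hJ1, hJ0, Finset.card_filter]
    push_cast
    apply Finset.sum_le_sum
    intro k _
    by_cases h : v k = 0 <;> simp [h, hbdd v hv k]
  have heq : ∀ u ∈ U1, J1 u = (J0 u : ℝ) := by
    intro u hu
    rw [hJ1, hJ0, Finset.card_filter]
    push_cast
    apply Finset.sum_congr rfl
    intro k _
    have h := htern u hu k
    simp only [Set.mem_insert_iff, Set.mem_singleton_iff] at h
    rcases h with h | h | h <;> simp [h]
  obtain ⟨w, hw⟩ := hU1ne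
  have hwU : w ∈ U := by rw [hU1] at hw; exact hw.1
  have hwmin : ∀ v ∈ U, J1 w ≤ J1 v := by rw [hU1] at hw; exact hw.2
  -- w is also a J0 minimizer
  have hwJ0 : ∀ v ∈ U, J0 w ≤ J0 v := by
    intro v hv
    have : (J0 w : ℝ) ≤ (J0 v : ℝ) := by
      rw [← heq w hw]
      exact le_trans (hwmin v hv) (hle v hv)
    exact_mod_cast this
  ext x
  constructor
  · intro hx
    rw [hU0] at hx
    obtain ⟨hxU, hxmin⟩ := hx
    -- J0 x = J0 w, and J1 x ≤ J0 x = J0 w = J1 w ≤ J1 x gives equality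
    have h1 : (J0 x : ℝ) = (J0 w : ℝ) := by
      exact_mod_cast le_antisymm (Nat.cast_le.mpr (hxmin w hwU)) (Nat.cast_le.mpr (hwJ0 x hxU))
    have h2 : J1 x = J1 w := by
      have ha : J1 x ≤ J1 w := by
        calc J1 x ≤ (J0 x : ℝ) := hle x hxU
          _ = (J0 w : ℝ) := h1
          _ = J1 w := (heq w hw).symm
      exact le_antisymm ha (hwmin x hxU)
    rw [hU1]
    exact ⟨hxU, fun v hv => h2 ▸ hwmin v hv⟩
  · intro hx
    rw [hU1] at hx
    obtain ⟨hxU, hxmin⟩ := hx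
    rw [hU0]
    refine ⟨hxU, fun v hv => ?_⟩
    have : (J0 x : ℝ) ≤ (J0 v : ℝ) := by
      rw [← heq x (by rw [hU1]; exact ⟨hxU, hxmin⟩)]
      exact le_trans (hxmin v hv) (hle v hv)
    exact_mod_cast this
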